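/- Let S be a sentential logic with DN-term m. Then for all formulas: (1) m^n(φ₀,…,φ_n,ψ) ⊢_S φ_i ∨ ψ for each i ≤ n; (2) φ₀∨ψ, …, φ_n∨ψ ⊢_S m^n(φ₀,…,φ_n,ψ); (3) if m^n(φ₀,…,φ_n,φ) ⊢_S φ then φ₀,…,φ_n ⊢_S φ; (4) φ ⊢_S m^n(φ₀,…,φ_n,φ). -/

import Mathlib

variable {Fm : Type*}

/-- The term `x ∨ y := m(x,x,y)`. -/
def supT (mt : Fm → Fm → Fm → Fm) (x y : Fm) : Fm := mt x x y

/-- `mN mt [φ₀,…,φₙ] ψ = mⁿ(φ₀,…,φₙ,ψ)`. -/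
def mN (mt : Fm → Fm → Fm → Fm) : List Fm → Fm → Fm
  | [], b => b
  | a :: t, b => t.foldl (fun acc x => mt acc x b) (mt a a b)

/-- Structural properties of a consequence relation: reflexivity, monotonicity, cut. -/
def IsConsequence (E : Set Fm → Fm → Prop) : Prop :=
  (∀ Γ φ, φ ∈ Γ → E Γ φ) ∧
  (∀ Γ Δ φ, E Γ φ → Γ ⊆ Δ → E Δ φ) ∧
  (∀ Γ Δ φ, E Γ φ → (∀ γ ∈ Γ, E Δ γ) → E Δ φ)

/-- `mt` is a DN-term of the logic `E`: conditions (A1)-(A4). -/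
def IsDNTerm (E : Set Fm → Fm → Prop) (mt : Fm → Fm → Fm → Fm) : Prop :=
  (∀ φ ψ χ, E {supT mt φ ψ} χ ↔ E {φ} χ ∧ E {ψ} χ) ∧
  (∀ φ ψ χ, E {mt φ ψ χ} (supT mt φ χ) ∧ E {mt φ ψ χ} (supT mt ψ χ)) ∧
  (∀ φ ψ χ, E {supT mt φ χ, supT mt ψ χ} (mt φ ψ χ)) ∧
  (∀ (l : List Fm) φ, l ≠ [] → E {x | x ∈ l} φ → E {mN mt l φ} φ)

/-- The Frege (interderivability) relation of the logic `E`. -/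
def Lam (E : Set Fm → Fm → Prop) (φ ψ : Fm) : Prop := E {φ} ψ ∧ E {ψ} φ

lemma mN_concat (mt : Fm → Fm → Fm → Fm) (l : List Fm) (hl : l ≠ []) (x b : Fm) :
    mN mt (l ++ [x]) b = mt (mN mt l b) x b := by
  obtain ⟨a, t, rfl⟩ := List.exists_cons_of_ne_nil hl
  simp [mN, List.foldl_append]

/-- Basic consequences of having a DN-term: properties (1)-(4) of
Proposition 3.2. -/
theorem stmt17 (E : Set Fm → Fm → Prop) (hE : IsConsequence E)
    (mt : Fm → Fm → Fm → Fm) (h : IsDNTerm E mt) :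
    (∀ (l : List Fm) (ψ : Fm), l ≠ [] →
      ∀ φ ∈ l, E {mN mt l ψ} (supT mt φ ψ)) ∧
    (∀ (l : List Fm) (ψ : Fm), l ≠ [] →
      E {x | ∃ φ ∈ l, x = supT mt φ ψ} (mN mt l ψ)) ∧
    (∀ (l : List Fm) (φ : Fm), l ≠ [] →
      E {mN mt l φ} φ → E {x | x ∈ l} φ) ∧
    (∀ (l : List Fm) (φ : Fm), l ≠ [] → E {φ} (mN mt l φ)) := by
  obtain ⟨refl, mono, cut⟩ := hE
  obtain ⟨hA1, hA2, hA3, _hA4⟩ := h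
  -- φ ⊢ φ ∨ ψ and ψ ⊢ φ ∨ ψ
  have hsup : ∀ φ ψ : Fm, E {φ} (supT mt φ ψ) ∧ E {ψ} (supT mt φ ψ) := fun φ ψ =>
    (hA1 φ ψ (supT mt φ ψ)).1 (refl _ _ rfl)
  -- (1)
  have p1 : ∀ (l : List Fm) (ψ : Fm), l ≠ [] → ∀ φ ∈ l, E {mN mt l ψ} (supT mt φ ψ) := by
    intro l
    induction l using List.reverseRecOn with
    | nil => intro ψ hl; exact absurd rfl hl
    | append_singleton l x ih =>
      intro ψ _ φ hφ
      rcases List.eq_nil_or_concat' l with rfl | _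
      · simp [mN] at hφ ⊢
        rcases hφ with rfl
        exact refl _ _ rfl
      · have hl : l ≠ [] := by rintro rfl; simp_all
        rw [mN_concat mt l hl x ψ]
        rcases List.mem_append.mp hφ with hφ | hφ
        · -- φ ∈ l : go through M ∨ ψ
          have h1 : E {mt (mN mt l ψ) x ψ} (supT mt (mN mt l ψ) ψ) := (hA2 _ x ψ).1
          have h2 : E {supT mt (mN mt l ψ) ψ} (supT mt φ ψ) :=
            (hA1 _ ψ _).2 ⟨ih ψ hl φ hφ, (hsup φ ψ).2⟩
          exact cut _ _ _ h2 (by rintro γ rfl; exact h1)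
        · simp at hφ; subst hφ
          exact (hA2 (mN mt l ψ) φ ψ).2
  -- (2)
  have p2 : ∀ (l : List Fm) (ψ : Fm), l ≠ [] →
      E {x | ∃ φ ∈ l, x = supT mt φ ψ} (mN mt l ψ) := by
    intro l
    induction l using List.reverseRecOn with
    | nil => intro ψ hl; exact absurd rfl hl
    | append_singleton l x ih =>
      intro ψ _
      rcases List.eq_nil_or_concat' l with rfl | _
      · refine refl _ _ ?_
        simp [mN, supT]
      · have hl : l ≠ [] := by rintro rfl; simp_all
        rw [mN_concat mt l hl x ψ]
        have hM : E {x_1 | ∃ φ ∈ l ++ [x], x_1 = supT mt φ ψ} (mN mt l ψ) :=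
          mono _ _ _ (ih ψ hl) (by rintro γ ⟨φ, hφ, rfl⟩; exact ⟨φ, by simp [hφ], rfl⟩)
        have hMsup : E {x_1 | ∃ φ ∈ l ++ [x], x_1 = supT mt φ ψ} (supT mt (mN mt l ψ) ψ) :=
          cut _ _ _ (hsup (mN mt l ψ) ψ).1 (by rintro γ rfl; exact hM)
        have hx : E {x_1 | ∃ φ ∈ l ++ [x], x_1 = supT mt φ ψ} (supT mt x ψ) :=
          refl _ _ ⟨x, by simp, rfl⟩
        refine cut _ _ _ (hA3 (mN mt l ψ) x ψ) ?_
        rintro γ (rfl | rfl)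
        · exact hMsup
        · exact hx
  -- (4)
  have p4 : ∀ (l : List Fm) (φ : Fm), l ≠ [] → E {φ} (mN mt l φ) := by
    intro l
    induction l using List.reverseRecOn with
    | nil => intro φ hl; exact absurd rfl hl
    | append_singleton l x ih =>
      intro φ _
      rcases List.eq_nil_or_concat' l with rfl | _
      · simpa [mN, supT] using (hsup x φ).2
      · have hl : l ≠ [] := by rintro rfl; simp_all
        rw [mN_concat mt l hl x φ]
        refine cut _ _ _ (hA3 (mN mt l φ) x φ) ?_
        rintro γ (rfl | rfl)
        · exact cut _ _ _ (hsup (mN mt l φ) φ).2  (by rintro γ rfl; exact refl _ _ rfl)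
        · exact (hsup x φ).2
  -- (3)
  refine ⟨p1, p2, ?_, p4⟩
  intro l φ hl hmn
  have h2 : E {x | x ∈ l} (mN mt l φ) := by
    refine cut _ _ _ (p2 l φ hl) ?_
    rintro γ ⟨ψ, hψ, rfl⟩
    exact cut _ _ _ (hsup ψ φ).1 (by rintro γ rfl; exact refl _ _ hψ)
  exact cut _ _ _ hmn (by rintro γ rfl; exact h2)
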